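/- Let W ∈ L(H) be a positive operator and A, B ∈ L(H) operators with closed range such that ker B = ker(A*W), suppose the pair (W, range A) is compatible, and let T be the shorted operator of W to range A. Then for X₀ ∈ L(H) the following conditions are equivalent: (i) (AX₀B − I)*W(AX₀B − I) = T; (ii) A*W(AX₀B − I) = 0; (iii) X₀B is a W-inverse of A, i.e. ⟨W(A(X₀B)x − x), A(X₀B)x − x⟩ ≤ ⟨W(Az − x), Az − x⟩ for all x, z ∈ H. -/

import Mathlib

open ContinuousLinearMap
open scoped ComplexInnerProductSpace

noncomputable section

variable {H : Type*} [NormedAddCommGroup H] [InnerProductSpace ℂ H] [CompleteSpace H]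

/-- `M(W,S)`: the set of operators `X` with `0 ≤ X ≤ W` (Loewner order) and `range X ⊆ S^⊥`. -/
def MSet (W : H →L[ℂ] H) (S : Submodule ℂ H) : Set (H →L[ℂ] H) :=
  {X | X.IsPositive ∧ (W - X).IsPositive ∧ LinearMap.range (↑X : H →ₗ[ℂ] H) ≤ Sᗮ}

/-- `T` is the shorted operator of `W` to `S`, i.e. the maximum of `M(W,S)` in the Loewner
order. -/
def IsShorted (W : H →L[ℂ] H) (S : Submodule ℂ H) (T : H →L[ℂ] H) : Prop :=
  T ∈ MSet W S ∧ ∀ X ∈ MSet W S, (T - X).IsPositive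

/-- The minus order: `A ⁻≤ B` iff there are bounded idempotents `P, Q` with `A = PB` and
`A* = QB*`. -/
def MinusLE (A B : H →L[ℂ] H) : Prop :=
  ∃ P Q : H →L[ℂ] H, IsIdempotentElem P ∧ IsIdempotentElem Q ∧
    A = P ∘L B ∧ adjoint A = Q ∘L adjoint B

/-- The pair `(W, N)` is compatible: there is a bounded idempotent `Q` with range `N` such that
`WQ` is selfadjoint. -/
def Compatible (W : H →L[ℂ] H) (N : Submodule ℂ H) : Prop :=
  ∃ Q : H →L[ℂ] H, IsIdempotentElem Q ∧ LinearMap.range (↑Q : H →ₗ[ℂ] H) = N ∧ IsSelfAdjoint (W ∘L Q)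

/-- `M⁻(W,S)`: operators `X` with `X ⁻≤ W`, `range X ⊆ S^⊥` and `range X* ⊆ S^⊥`. -/
def MMinusSet (W : H →L[ℂ] H) (S : Submodule ℂ H) : Set (H →L[ℂ] H) :=
  {X | MinusLE X W ∧ LinearMap.range (↑X : H →ₗ[ℂ] H) ≤ Sᗮ ∧ LinearMap.range (↑(adjoint X) : H →ₗ[ℂ] H) ≤ Sᗮ}

/-- `X₀` is a `W`-inverse of `M` in `R(C)`: for every `x`, `X₀ x` is a `W`-weighted least squares
solution of `M z = C x`. -/
def WInverseIn (W M C X₀ : H →L[ℂ] H) : Prop :=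
  ∀ x z : H, (⟪W (M (X₀ x) - C x), M (X₀ x) - C x⟫).re ≤ (⟪W (M z - C x), M z - C x⟫).re

/-- The left weighted star order `A ₋*_W≤ B`. -/
def LStarW (W A B : H →L[ℂ] H) : Prop :=
  LinearMap.range (↑B : H →ₗ[ℂ] H) = LinearMap.range (↑A : H →ₗ[ℂ] H) ⊔ LinearMap.range (↑(B - A) : H →ₗ[ℂ] H) ∧
  LinearMap.range (↑A : H →ₗ[ℂ] H) ⊓ LinearMap.range (↑(B - A) : H →ₗ[ℂ] H) = ⊥ ∧
  LinearMap.range (↑(B - A) : H →ₗ[ℂ] H) ≤ LinearMap.ker (↑(adjoint A ∘L W) : H →ₗ[ℂ] H)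

/-- The right weighted star order `A ≤*_W B`. -/
def RStarW (W A B : H →L[ℂ] H) : Prop :=
  LinearMap.range (↑(adjoint B) : H →ₗ[ℂ] H) =
    LinearMap.range (↑(adjoint A) : H →ₗ[ℂ] H) ⊔ LinearMap.range (↑(adjoint B - adjoint A) : H →ₗ[ℂ] H) ∧
  LinearMap.range (↑(adjoint A) : H →ₗ[ℂ] H) ⊓ LinearMap.range (↑(adjoint B - adjoint A) : H →ₗ[ℂ] H) = ⊥ ∧
  LinearMap.range (↑(adjoint B - adjoint A) : H →ₗ[ℂ] H) ≤ LinearMap.ker (↑(A ∘L W) : H →ₗ[ℂ] H)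

/-- The weighted star order `A *_W≤ B`. -/
def StarW (W A B : H →L[ℂ] H) : Prop :=
  LStarW W A B ∧ RStarW W A B


lemma quad_zero {b c : ℝ} (hc : 0 ≤ c) (h : ∀ t : ℝ, 0 ≤ 2*t*b + t^2*c) : b = 0 := by
  have hc1 : (0:ℝ) < c + 1 := by linarith
  have h1 : 0 ≤ (2 * (-b/(c+1)) * b + (-b/(c+1))^2 * c) * (c+1)^2 :=
    mul_nonneg (h _) (by positivity)
  have h2 : (2 * (-b/(c+1)) * b + (-b/(c+1))^2 * c) * (c+1)^2 = -(b^2*(c+2)) := by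
    field_simp
    ring
  rw [h2] at h1
  have hb2 : b^2 = 0 := le_antisymm (by nlinarith) (sq_nonneg b)
  exact (pow_eq_zero_iff two_ne_zero).mp hb2

lemma wsym {W : H →L[ℂ] H} (hW : IsSelfAdjoint W) (a b : H) :
    ⟪W a, b⟫ = ⟪a, W b⟫ := by
  conv_lhs => rw [← hW.adjoint_eq]
  exact adjoint_inner_left W b a

lemma re_expand {W : H →L[ℂ] H} (hW : IsSelfAdjoint W) (v u : H) (c : ℂ) :
    (⟪W (v + c • u), v + c • u⟫).re =
      (⟪W v, v⟫).re + 2 * (c * ⟪W v, u⟫).re + Complex.normSq c * (⟪W u, u⟫).re := by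
  have h2 : ⟪W u, v⟫ = (starRingEnd ℂ) ⟪W v, u⟫ := by
    rw [wsym hW u v, ← inner_conj_symm]
  have h1 : ⟪W (v + c • u), v + c • u⟫ =
      ⟪W v, v⟫ + (c * ⟪W v, u⟫ + (starRingEnd ℂ) (c * ⟪W v, u⟫)) +
        (Complex.normSq c : ℂ) * ⟪W u, u⟫ := by
    rw [map_add, map_smul, inner_add_left, inner_add_right, inner_add_right,
        inner_smul_right, inner_smul_left, inner_smul_left, inner_smul_right, h2,
        map_mul, Complex.normSq_eq_conj_mul_self]
    ring
  have hz : ∀ z : ℂ, (z + (starRingEnd ℂ) z).re = 2 * z.re := fun z => by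
    rw [Complex.add_re, Complex.conj_re]; ring
  rw [h1, Complex.add_re, Complex.add_re, hz, Complex.re_ofReal_mul]

lemma pos_min_iff {W : H →L[ℂ] H} (hW : W.IsPositive) (v u : H) :
    (∀ c : ℂ, (⟪W v, v⟫).re ≤ (⟪W (v + c • u), v + c • u⟫).re) ↔ ⟪W v, u⟫ = 0 := by
  have hd : 0 ≤ (⟪W u, u⟫).re := hW.re_inner_nonneg_left u
  constructor
  · intro h
    have hre : (⟪W v, u⟫).re = 0 := by
      apply quad_zero hd
      intro t
      have := h (t : ℂ)
      rw [re_expand hW.isSelfAdjoint] at this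
      have h1 : ((t:ℂ) * ⟪W v, u⟫).re = t * (⟪W v, u⟫).re := Complex.re_ofReal_mul t _
      have h2 : Complex.normSq (t:ℂ) = t^2 := by
        simp [Complex.normSq_ofReal, sq]
      rw [h1, h2] at this
      linarith
    have him : -(⟪W v, u⟫).im = 0 := by
      apply quad_zero hd
      intro t
      have := h ((t : ℂ) * Complex.I)
      rw [re_expand hW.isSelfAdjoint] at this
      have h1 : ((t:ℂ) * Complex.I * ⟪W v, u⟫).re = t * -(⟪W v, u⟫).im := by
        rw [mul_assoc, Complex.re_ofReal_mul]
        simp [Complex.I_mul_re]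
      have h2 : Complex.normSq ((t:ℂ) * Complex.I) = t^2 := by
        simp [Complex.normSq_mul, Complex.normSq_ofReal, sq]
      rw [h1, h2] at this
      linarith
    have him' : (⟪W v, u⟫).im = 0 := by linarith
    exact Complex.ext hre (by simpa using him')
  · intro h0 c
    rw [re_expand hW.isSelfAdjoint, h0, mul_zero, Complex.zero_re, mul_zero, add_zero]
    nlinarith [Complex.normSq_nonneg c]

lemma mem_bound {W T : H →L[ℂ] H} {S : Submodule ℂ H}
    (hTpos : T.IsPositive) (hWT : (W - T).IsPositive) (hrange : LinearMap.range (↑T : H →ₗ[ℂ] H) ≤ Sᗮ)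
    (x : H) {s : H} (hs : s ∈ S) :
    (⟪T x, x⟫).re ≤ (⟪W (x - s), x - s⟫).re := by
  have hTa : ∀ a : H, ∀ s' ∈ S, ⟪s', T a⟫ = 0 := fun a s' hs' =>
    (Submodule.mem_orthogonal S (T a)).mp (hrange ⟨a, rfl⟩) s' hs'
  have hTs : ∀ a : H, ∀ s' ∈ S, ⟪T a, s'⟫ = 0 := fun a s' hs' =>
    inner_eq_zero_symm.mp (hTa a s' hs')
  have h1 : ⟪T (x - s), x - s⟫ = ⟪T x, x⟫ := by
    rw [map_sub, inner_sub_left, inner_sub_right, inner_sub_right]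
    rw [hTs x s hs, hTs s s hs, wsym hTpos.isSelfAdjoint s x, hTa x s hs]
    ring
  have h2 : 0 ≤ (⟪W (x-s), x-s⟫).re - (⟪T (x-s), x-s⟫).re := by
    have h3 := hWT.re_inner_nonneg_left (x - s)
    rw [sub_apply, inner_sub_left] at h3
    simp only [RCLike.re_to_complex, Complex.sub_re] at h3
    linarith
  rw [h1] at h2
  linarith

lemma adjoint_apply_eq_zero_iff (A : H →L[ℂ] H) (v : H) :
    adjoint A v = 0 ↔ ∀ y, ⟪v, A y⟫ = 0 := by
  constructor
  · intro h y; rw [← adjoint_inner_left, h, inner_zero_left]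
  · intro h
    have := h (adjoint A v)
    rw [← adjoint_inner_left] at this
    exact inner_self_eq_zero.mp this

/-- if `(W, range A)` is compatible, then for `X₀` the conditions
(i) `(AX₀B - I)* W (AX₀B - I) = T`; (ii) `A* W (AX₀B - I) = 0`; (iii) `X₀ B` is a
`W`-inverse of `A`, are equivalent. -/
theorem stmt12 (W A B T X₀ : H →L[ℂ] H) (hW : W.IsPositive)
    (hA : IsClosed (LinearMap.range (↑A : H →ₗ[ℂ] H) : Set H)) (hB : IsClosed (LinearMap.range (↑B : H →ₗ[ℂ] H) : Set H))
    (hker : LinearMap.ker (↑B : H →ₗ[ℂ] H) = LinearMap.ker (↑(adjoint A ∘L W) : H →ₗ[ℂ] H))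
    (hcomp : Compatible W (LinearMap.range (↑A : H →ₗ[ℂ] H)))
    (hT : IsShorted W (LinearMap.range (↑A : H →ₗ[ℂ] H)) T) :
    [adjoint (A ∘L X₀ ∘L B - 1) ∘L (W ∘L (A ∘L X₀ ∘L B - 1)) = T,
     adjoint A ∘L (W ∘L (A ∘L X₀ ∘L B - 1)) = 0,
     WInverseIn W A 1 (X₀ ∘L B)].TFAE := by
  obtain ⟨⟨hTpos, hWT, hTrange⟩, hTmax⟩ := hT
  set E : H →L[ℂ] H := A ∘L X₀ ∘L B - 1 with hEdef
  have hEx : ∀ x, E x = A (X₀ (B x)) - x := fun x => by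
    simp [hEdef, sub_apply, comp_apply, one_apply]
  have h2iff : (adjoint A ∘L (W ∘L E) = 0) ↔ ∀ x y, ⟪W (E x), A y⟫ = 0 := by
    constructor
    · intro h x
      rw [← adjoint_apply_eq_zero_iff]
      have := congrFun (congrArg DFunLike.coe h) x
      simpa [comp_apply] using this
    · intro h
      ext x
      simp only [comp_apply, zero_apply]
      exact (adjoint_apply_eq_zero_iff A _).mpr (h x)
  tfae_have 2 → 3 := by
    intro h2 x z
    have h := h2iff.mp h2
    have e1 : A ((X₀ ∘L B) x) - (1 : H →L[ℂ] H) x = E x := by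
      rw [hEx x]; simp [comp_apply, one_apply]
    have e2 : A z - (1 : H →L[ℂ] H) x = E x + (1:ℂ) • (A (z - X₀ (B x))) := by
      rw [hEx x]; simp only [one_apply, map_sub, one_smul]; abel
    rw [e1, e2]
    exact (pos_min_iff hW (E x) (A (z - X₀ (B x)))).mpr (h x _) 1
  tfae_have 3 → 2 := by
    intro h3
    rw [h2iff]
    intro x y
    apply (pos_min_iff hW (E x) (A y)).mp
    intro c
    have h := h3 x (X₀ (B x) + c • y)
    have e1 : A ((X₀ ∘L B) x) - (1 : H →L[ℂ] H) x = E x := by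
      rw [hEx x]; simp [comp_apply, one_apply]
    have e2 : A (X₀ (B x) + c • y) - (1 : H →L[ℂ] H) x = E x + c • A y := by
      rw [hEx x]; simp only [one_apply, map_add, map_smul]; abel
    rwa [e1, e2] at h
  tfae_have 2 → 1 := by
    intro h2
    have hAo : ∀ x y, ⟪W (E x), A y⟫ = 0 := h2iff.mp h2
    have hA0 : ∀ x, adjoint A (W (E x)) = 0 := fun x =>
      (adjoint_apply_eq_zero_iff A _).mpr (hAo x)
    set X : H →L[ℂ] H := adjoint E ∘L (W ∘L E) with hXdef
    have hadjE : adjoint E = adjoint (A ∘L X₀ ∘L B) - 1 := by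
      rw [hEdef, ← star_eq_adjoint, ← star_eq_adjoint, star_sub, star_one]
    have hXpt : ∀ x, X x = -(W (E x)) := fun x => by
      simp [hXdef, comp_apply, hadjE, sub_apply, one_apply, hA0 x]
    have hXpos : X.IsPositive := by
      have := hW.adjoint_conj E
      rwa [hXdef]
    have hWX : (W - X).IsPositive := by
      refine isPositive_def'.mpr ⟨hW.isSelfAdjoint.sub hXpos.isSelfAdjoint, fun x => ?_⟩
      show 0 ≤ RCLike.re ⟪(W - X) x, x⟫
      set p : H := A (X₀ (B x)) with hpdef
      have hx : x = p - E x := by rw [hEx x]; abel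
      have cross1 : ⟪W (E x), p⟫ = 0 := hAo x (X₀ (B x))
      have e4 : ⟪W (E x), x⟫ = -⟪W (E x), E x⟫ := by
        have h' : ⟪W (E x), p - E x⟫ = -⟪W (E x), E x⟫ := by
          rw [inner_sub_right, cross1]; ring
        rwa [← hx] at h'
      have cross2 : ⟪W p, E x⟫ = 0 := by
        rw [wsym hW.isSelfAdjoint]; exact inner_eq_zero_symm.mp cross1
      have hxx : ⟪W x, x⟫ = ⟪W p, p⟫ + ⟪W (E x), E x⟫ := by
        have h' : ⟪W (p - E x), p - E x⟫ = ⟪W p, p⟫ + ⟪W (E x), E x⟫ := by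
          rw [map_sub, inner_sub_left, inner_sub_right, inner_sub_right, cross1, cross2]
          ring
        rwa [← hx] at h'
      have e3 : ⟪(W - X) x, x⟫ = ⟪W p, p⟫ := by
        rw [sub_apply, inner_sub_left, hXpt x, hxx, inner_neg_left, e4]
        ring
      rw [e3]
      exact hW.re_inner_nonneg_left p
    have hXrange : LinearMap.range (↑X : H →ₗ[ℂ] H) ≤ (LinearMap.range (↑A : H →ₗ[ℂ] H))ᗮ := by
      rintro v ⟨x, rfl⟩
      rw [Submodule.mem_orthogonal]
      rintro u ⟨y, rfl⟩
      change ⟪A y, X x⟫ = 0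
      rw [hXpt x, inner_neg_right, inner_eq_zero_symm.mp (hAo x y), neg_zero]
    have hTX : (T - X).IsPositive := hTmax X ⟨hXpos, hWX, hXrange⟩
    have hTleX : ∀ x, (⟪T x, x⟫).re ≤ (⟪X x, x⟫).re := by
      intro x
      have hb := mem_bound hTpos hWT hTrange x (s := A (X₀ (B x))) ⟨X₀ (B x), rfl⟩
      have e5 : x - A (X₀ (B x)) = -(E x) := by rw [hEx x]; abel
      have e6 : ⟪W (-(E x)), -(E x)⟫ = ⟪X x, x⟫ := by
        rw [map_neg, inner_neg_neg, hXdef, comp_apply, comp_apply, adjoint_inner_left]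
      rw [e5, e6] at hb
      exact hb
    have hD0 : ∀ x, ⟪(T - X) x, x⟫ = 0 := by
      intro x
      have h1 : 0 ≤ (⟪(T - X) x, x⟫).re := by
        have := hTX.re_inner_nonneg_left x
        exact this
      have h2 : (⟪(T - X) x, x⟫).re ≤ 0 := by
        rw [sub_apply, inner_sub_left, Complex.sub_re]
        have := hTleX x; linarith
      have hconj : (starRingEnd ℂ) ⟪(T - X) x, x⟫ = ⟪(T - X) x, x⟫ := by
        rw [inner_conj_symm]
        exact (wsym (hTpos.isSelfAdjoint.sub hXpos.isSelfAdjoint) x x).symm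
      have him0 : (⟪(T - X) x, x⟫).im = 0 := Complex.conj_eq_iff_im.mp hconj
      exact Complex.ext (le_antisymm h2 h1) (by simpa using him0)
    have hsub0 : (T - X : H →L[ℂ] H) = 0 := by
      apply ContinuousLinearMap.coe_injective
      rw [ContinuousLinearMap.coe_zero]
      exact (inner_map_self_eq_zero ((T - X : H →L[ℂ] H) : H →ₗ[ℂ] H)).mp
        (fun x => hD0 x)
    exact (sub_eq_zero.mp hsub0).symm
  tfae_have 1 → 2 := by
    intro h1
    rw [h2iff]
    intro x y
    apply (pos_min_iff hW (E x) (A y)).mp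
    intro c
    have hTx : ⟪T x, x⟫ = ⟪W (E x), E x⟫ := by
      rw [← h1, comp_apply, comp_apply, adjoint_inner_left]
    have hs : A (X₀ (B x)) + c • A y ∈ LinearMap.range (↑A : H →ₗ[ℂ] H) :=
      ⟨X₀ (B x) + c • y, by simp [map_add, map_smul]⟩
    have hb := mem_bound hTpos hWT hTrange x hs
    have e7 : x - (A (X₀ (B x)) + c • A y) = -(E x + c • A y) := by
      rw [hEx x]; abel
    rw [e7, map_neg, inner_neg_neg, hTx] at hb
    exact hb
  tfae_finish
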